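/- Let P be a monic hyperbolic real polynomial of degree n, let 1 ≤ k ≤ n−1, let x₁ ≤ … ≤ xₙ be the roots of P listed in increasing order with multiplicity, and let ξ₁ ≤ … ≤ ξ_{n−k} be the roots of P^{(k)} listed in increasing order with multiplicity. Then for every i with 1 ≤ i ≤ n−k one has x_i ≤ ξ_i ≤ x_{i+k}. -/

import Mathlib

open Polynomial

private lemma poly_rolle (P : Polynomial ℝ) {u v : ℝ} (huv : u < v)
    (hu : P.IsRoot u) (hv : P.IsRoot v) :
    ∃ c ∈ Set.Ioo u v, P.derivative.IsRoot c := by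
  obtain ⟨c, hc, hc'⟩ := exists_deriv_eq_zero huv (P.continuous.continuousOn)
    (by rw [hu.eq_zero, hv.eq_zero])
  exact ⟨c, hc, by rwa [Polynomial.deriv] at hc'⟩

private lemma gap_roots (P : Polynomial ℝ) (l : List ℝ) :
    ∀ (y : ℝ), (y :: l).Pairwise (· < ·) → (∀ z ∈ y :: l, P.IsRoot z) →
    ∃ C : List ℝ, C.length = l.length ∧ C.Nodup ∧ (∀ c ∈ C, P.derivative.IsRoot c) ∧
      (∀ c ∈ C, y < c) ∧ (∀ c ∈ C, ∃ v ∈ l, c < v) ∧ (∀ c ∈ C, c ∉ y :: l) := by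
  induction l with
  | nil => intro y _ _; exact ⟨[], by simp⟩
  | cons y' l' ih =>
    intro y hch hr
    have hyy' : y < y' := (List.pairwise_cons.mp hch).1 y' (by simp)
    have htail : (y' :: l').Pairwise (· < ·) := (List.pairwise_cons.mp hch).2
    obtain ⟨C', hlen, hnd, hroot, hgt, hlt, hnm⟩ :=
      ih y' htail (fun z hz => hr z (List.mem_cons_of_mem _ hz))
    obtain ⟨c, hc, hcr⟩ := poly_rolle P hyy' (hr y (by simp)) (hr y' (by simp))
    have hl' : ∀ z ∈ l', y' < z := fun z hz => (List.pairwise_cons.mp htail).1 z hz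
    refine ⟨c :: C', by simp [hlen], ?_, ?_, ?_, ?_, ?_⟩
    · exact List.nodup_cons.mpr ⟨fun h => absurd (hgt c h) (by linarith [hc.2]), hnd⟩
    · intro d hd; rcases List.mem_cons.mp hd with rfl | hd
      · exact hcr
      · exact hroot d hd
    · intro d hd; rcases List.mem_cons.mp hd with rfl | hd
      · exact hc.1
      · exact lt_trans hyy' (hgt d hd)
    · intro d hd; rcases List.mem_cons.mp hd with rfl | hd
      · exact ⟨y', by simp, hc.2⟩
      · obtain ⟨v, hv, hdv⟩ := hlt d hd
        exact ⟨v, List.mem_cons_of_mem _ hv, hdv⟩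
    · intro d hd hmem
      rcases List.mem_cons.mp hd with rfl | hd
      · rcases List.mem_cons.mp hmem with rfl | hmem
        · exact absurd hc.1 (lt_irrefl _)
        · rcases List.mem_cons.mp hmem with rfl | hmem
          · exact absurd hc.2 (lt_irrefl _)
          · exact absurd (hl' d hmem) (by linarith [hc.2])
      · rcases List.mem_cons.mp hmem with rfl | hmem
        · exact absurd (hgt d hd) (by linarith)
        · exact hnm d hd hmem

private lemma countP_roots_le_derivative (P : Polynomial ℝ) (p : ℝ → Prop) [DecidablePred p]
    (hconv : ∀ u v w : ℝ, p u → p v → u ≤ w → w ≤ v → p w) :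
    P.roots.countP p ≤ P.derivative.roots.countP p + 1 := by
  classical
  by_cases hP' : P.derivative = 0
  · have hroots0 : P.roots = 0 := by
      by_cases hP : P = 0
      · simp [hP]
      · have h0 : P.natDegree = 0 := natDegree_eq_zero_of_derivative_eq_zero hP'
        have := P.card_roots'
        rw [h0] at this
        exact Multiset.card_eq_zero.mp (Nat.le_zero.mp this)
    simp [hroots0]
  · have hP : P ≠ 0 := fun h => hP' (by simp [h])
    set R := P.roots.filter p with hRdef
    clear_value R
    have hmemR : ∀ z, z ∈ R.toFinset.sort (· ≤ ·) ↔ z ∈ R := by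
      intro z; rw [Finset.mem_sort, Multiset.mem_toFinset]
    rcases hsort : R.toFinset.sort (· ≤ ·) with _ | ⟨y, l⟩
    · have hR0 : R = 0 := by
        refine Multiset.eq_zero_of_forall_notMem (fun z hz => ?_)
        have := (hmemR z).mpr hz
        rw [hsort] at this
        simp at this
      have : P.roots.countP p = 0 := by
        rw [Multiset.countP_eq_card_filter, ← hRdef, hR0, Multiset.card_zero]
      omega
    · have hsorted : (y :: l).Pairwise (· < ·) := by
        rw [← hsort]; exact (Finset.sortedLT_sort _).pairwise
      have hmem' : ∀ z, z ∈ y :: l ↔ z ∈ R := by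
        intro z; rw [← hmemR z, hsort]
      have hRP : R ≤ P.roots := by rw [hRdef]; exact Multiset.filter_le _ _
      have hrootsR : ∀ z ∈ y :: l, P.IsRoot z := by
        intro z hz
        exact isRoot_of_mem_roots (Multiset.mem_of_le hRP ((hmem' z).mp hz))
      obtain ⟨C, hlen, hnd, hroot, hgt, hlt, hnm⟩ := gap_roots P l y hsorted hrootsR
      set T : Multiset ℝ := (R - R.dedup) + (↑C : Multiset ℝ) with hTdef
      clear_value T
      have hpy : p y := by
        have h := (hmem' y).mp (by simp)
        rw [hRdef] at h
        exact (Multiset.mem_filter.mp h).2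
      have hTle : T ≤ P.derivative.roots.filter p := by
        rw [Multiset.le_iff_count]
        intro z
        rw [hTdef, Multiset.count_add, Multiset.count_sub, Multiset.count_filter]
        by_cases hzC : z ∈ C
        · have hzR : z ∉ R := fun h => hnm z hzC ((hmem' z).mpr h)
          have hcR : R.count z = 0 := Multiset.count_eq_zero_of_notMem hzR
          have hcC : (↑C : Multiset ℝ).count z ≤ 1 :=
            Multiset.nodup_iff_count_le_one.mp (by exact hnd) z
          obtain ⟨v, hv, hzv⟩ := hlt z hzC
          have hpv : p v := by
            have h := (hmem' v).mp (List.mem_cons_of_mem _ hv)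
            rw [hRdef] at h
            exact (Multiset.mem_filter.mp h).2
          have hpz : p z := hconv y v z hpy hpv (le_of_lt (hgt z hzC)) (le_of_lt hzv)
          have hzmem : z ∈ P.derivative.roots := by
            rw [mem_roots hP']; exact hroot z hzC
          have : 1 ≤ P.derivative.roots.count z := Multiset.one_le_count_iff_mem.mpr hzmem
          rw [if_pos hpz]
          omega
        · have hcC : (↑C : Multiset ℝ).count z = 0 :=
            Multiset.count_eq_zero_of_notMem (by exact hzC)
          by_cases hzR : z ∈ R
          · have hpz : p z := by
              have h := hzR
              rw [hRdef] at h
              exact (Multiset.mem_filter.mp h).2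
            have hzroot : P.IsRoot z := isRoot_of_mem_roots (Multiset.mem_of_le hRP hzR)
            have hcd : R.dedup.count z = 1 := by rw [Multiset.count_dedup, if_pos hzR]
            have h1 : R.count z ≤ P.roots.count z := Multiset.count_le_of_le z hRP
            have h2 : P.roots.count z = P.rootMultiplicity z := P.count_roots
            have h3 : P.derivative.roots.count z = P.derivative.rootMultiplicity z :=
              P.derivative.count_roots
            have h4 : P.derivative.rootMultiplicity z = P.rootMultiplicity z - 1 :=
              derivative_rootMultiplicity_of_root hzroot
            rw [if_pos hpz]
            omega
          · have : R.count z = 0 := Multiset.count_eq_zero_of_notMem hzR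
            simp [this, hcC]
      have hded : Multiset.card R.dedup = l.length + 1 := by
        have h1 : Multiset.card R.dedup = R.toFinset.card := rfl
        have h2 : R.toFinset.card = (R.toFinset.sort (· ≤ ·)).length :=
          (Finset.length_sort _).symm
        rw [h1, h2, hsort]
        simp
      have hcardR : l.length + 1 ≤ Multiset.card R :=
        hded ▸ Multiset.card_le_card R.dedup_le
      have hcardT : Multiset.card T = Multiset.card R - 1 := by
        have h1 : Multiset.card (R - R.dedup) = Multiset.card R - Multiset.card R.dedup :=
          Multiset.card_sub R.dedup_le
        have h3 : Multiset.card (↑C : Multiset ℝ) = l.length := by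
          simpa using hlen
        rw [hTdef, Multiset.card_add, h1, hded, h3]
        omega
      have hfin : Multiset.card T ≤ P.derivative.roots.countP p := by
        rw [Multiset.countP_eq_card_filter]
        exact Multiset.card_le_card hTle
      rw [Multiset.countP_eq_card_filter, ← hRdef]
      omega

private lemma countP_roots_le_iterate (P : Polynomial ℝ) (p : ℝ → Prop) [DecidablePred p]
    (hconv : ∀ u v w : ℝ, p u → p v → u ≤ w → w ≤ v → p w) (k : ℕ) :
    P.roots.countP p ≤ (Polynomial.derivative^[k] P).roots.countP p + k := by
  induction k with
  | zero => simp
  | succ k ih =>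
    rw [Function.iterate_succ_apply']
    have := countP_roots_le_derivative (Polynomial.derivative^[k] P) p hconv
    omega

/-- Rolle interlacing: if `P` is a monic hyperbolic real polynomial of degree `n`
with roots `x 0 ≤ … ≤ x (n-1)` (listed in increasing order with multiplicity),
`1 ≤ k ≤ n - 1`, and `ξ 0 ≤ … ≤ ξ (n-k-1)` are the roots of `P^{(k)}` listed
in increasing order with multiplicity, then `x i ≤ ξ i ≤ x (i+k)` for all `i`. -/
theorem roots_of_derivative_interlace
    (n k : ℕ) (hk : 1 ≤ k) (hk' : k ≤ n - 1)
    (x : Fin n → ℝ) (hx : Monotone x)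
    (P : Polynomial ℝ) (hP : P = ∏ i, (X - C (x i)))
    (ξ : Fin (n - k) → ℝ) (hξ : Monotone ξ)
    (hfac : Polynomial.derivative^[k] P =
      C ((Polynomial.derivative^[k] P).leadingCoeff) * ∏ i, (X - C (ξ i))) :
    ∀ i : Fin (n - k),
      x ⟨i.1, by have := i.isLt; omega⟩ ≤ ξ i ∧
      ξ i ≤ x ⟨i.1 + k, by have := i.isLt; omega⟩ := by
  classical
  intro i
  have hin : i.1 < n - k := i.isLt
  have hn2 : 2 ≤ n := by omega
  have hkn : k ≤ n := by omega
  -- degree and monicity of P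
  have hmonic : P.Monic := by
    rw [hP]; exact monic_prod_of_monic _ _ (fun j _ => monic_X_sub_C _)
  have hdegP : P.natDegree = n := by
    rw [hP, natDegree_prod_of_monic _ _ (fun j _ => monic_X_sub_C _)]
    simp [natDegree_X_sub_C]
  -- the k-th derivative is nonzero
  have hPk_ne : Polynomial.derivative^[k] P ≠ 0 := by
    intro h0
    have hcoeff : (Polynomial.derivative^[k] P).coeff (n - k) =
        (n - k + k).descFactorial k • P.coeff (n - k + k) :=
      coeff_iterate_derivative P (n - k)
    rw [show n - k + k = n from by omega] at hcoeff
    have hc1 : P.coeff n = 1 := by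
      have := hmonic.coeff_natDegree
      rwa [hdegP] at this
    rw [h0, hc1, coeff_zero] at hcoeff
    have hd : n.descFactorial k ≠ 0 := by
      intro h
      have := Nat.descFactorial_eq_zero_iff_lt.mp h
      omega
    rw [nsmul_eq_mul, mul_one] at hcoeff
    exact hd (by exact_mod_cast hcoeff.symm)
  have hlc : (Polynomial.derivative^[k] P).leadingCoeff ≠ 0 :=
    leadingCoeff_ne_zero.mpr hPk_ne
  -- root multisets
  have hrootsP : P.roots = Multiset.map x Finset.univ.val := by
    rw [hP, Finset.prod_eq_multiset_prod]
    have : Multiset.map (fun i => X - C (x i)) Finset.univ.val =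
        Multiset.map (fun a => X - C a) (Multiset.map x Finset.univ.val) := by
      rw [Multiset.map_map]; rfl
    rw [this, roots_multiset_prod_X_sub_C]
  have hrootsPk : (Polynomial.derivative^[k] P).roots = Multiset.map ξ Finset.univ.val := by
    rw [hfac, roots_C_mul _ hlc, Finset.prod_eq_multiset_prod]
    have : Multiset.map (fun i => X - C (ξ i)) Finset.univ.val =
        Multiset.map (fun a => X - C a) (Multiset.map ξ Finset.univ.val) := by
      rw [Multiset.map_map]; rfl
    rw [this, roots_multiset_prod_X_sub_C]
  constructor
  · -- x i ≤ ξ i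
    by_contra hlt
    push_neg at hlt
    set a := ξ i with ha
    set p : ℝ → Prop := fun t => a < t with hp
    have hconv : ∀ u v w : ℝ, p u → p v → u ≤ w → w ≤ v → p w := by
      intro u v w hu _ huw _; exact lt_of_lt_of_le hu huw
    have key := countP_roots_le_iterate P p hconv k
    rw [hrootsP, hrootsPk, Multiset.countP_map, Multiset.countP_map] at key
    have hcP : Multiset.card (Multiset.filter (fun j => p (x j)) Finset.univ.val) =
        (Finset.univ.filter (fun j : Fin n => p (x j))).card := rfl
    have hcPk : Multiset.card (Multiset.filter (fun j => p (ξ j)) Finset.univ.val) =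
        (Finset.univ.filter (fun j : Fin (n - k) => p (ξ j))).card := rfl
    rw [hcP, hcPk] at key
    -- upper bound on ξ side
    have hsplitξ := Finset.card_filter_add_card_filter_not
      (s := (Finset.univ : Finset (Fin (n - k)))) (p := fun j => p (ξ j))
    have hlowξ : i.1 + 1 ≤ (Finset.univ.filter (fun j : Fin (n - k) => ¬ p (ξ j))).card := by
      have hsub : Finset.Iic i ⊆ Finset.univ.filter (fun j : Fin (n - k) => ¬ p (ξ j)) := by
        intro j hj
        rw [Finset.mem_Iic] at hj
        rw [Finset.mem_filter]
        exact ⟨Finset.mem_univ _, not_lt.mpr (hξ hj)⟩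
      calc i.1 + 1 = (Finset.Iic i).card := (Fin.card_Iic i).symm
        _ ≤ _ := Finset.card_le_card hsub
    have hcardu : (Finset.univ : Finset (Fin (n - k))).card = n - k := by simp
    -- lower bound on x side
    have hlowx : n - i.1 ≤ (Finset.univ.filter (fun j : Fin n => p (x j))).card := by
      have hsub : Finset.Ici (⟨i.1, by omega⟩ : Fin n) ⊆
          Finset.univ.filter (fun j : Fin n => p (x j)) := by
        intro j hj
        rw [Finset.mem_Ici] at hj
        rw [Finset.mem_filter]
        exact ⟨Finset.mem_univ _, lt_of_lt_of_le hlt (hx hj)⟩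
      calc n - i.1 = (Finset.Ici (⟨i.1, by omega⟩ : Fin n)).card := by rw [Fin.card_Ici]
        _ ≤ _ := Finset.card_le_card hsub
    omega
  · -- ξ i ≤ x (i + k)
    by_contra hlt
    push_neg at hlt
    set a := ξ i with ha
    set p : ℝ → Prop := fun t => t < a with hp
    have hconv : ∀ u v w : ℝ, p u → p v → u ≤ w → w ≤ v → p w := by
      intro u v w _ hv _ hwv; exact lt_of_le_of_lt hwv hv
    have key := countP_roots_le_iterate P p hconv k
    rw [hrootsP, hrootsPk, Multiset.countP_map, Multiset.countP_map] at key
    have hcP : Multiset.card (Multiset.filter (fun j => p (x j)) Finset.univ.val) =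
        (Finset.univ.filter (fun j : Fin n => p (x j))).card := rfl
    have hcPk : Multiset.card (Multiset.filter (fun j => p (ξ j)) Finset.univ.val) =
        (Finset.univ.filter (fun j : Fin (n - k) => p (ξ j))).card := rfl
    rw [hcP, hcPk] at key
    -- lower bound on x side
    have hlowx : i.1 + k + 1 ≤ (Finset.univ.filter (fun j : Fin n => p (x j))).card := by
      have hsub : Finset.Iic (⟨i.1 + k, by omega⟩ : Fin n) ⊆
          Finset.univ.filter (fun j : Fin n => p (x j)) := by
        intro j hj
        rw [Finset.mem_Iic] at hj
        rw [Finset.mem_filter]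
        exact ⟨Finset.mem_univ _, lt_of_le_of_lt (hx hj) hlt⟩
      calc i.1 + k + 1 = (Finset.Iic (⟨i.1 + k, by omega⟩ : Fin n)).card := by
            rw [Fin.card_Iic]
        _ ≤ _ := Finset.card_le_card hsub
    -- upper bound on ξ side
    have hsplitξ := Finset.card_filter_add_card_filter_not
      (s := (Finset.univ : Finset (Fin (n - k)))) (p := fun j => p (ξ j))
    have hlowξ : n - k - i.1 ≤ (Finset.univ.filter (fun j : Fin (n - k) => ¬ p (ξ j))).card := by
      have hsub : Finset.Ici i ⊆ Finset.univ.filter (fun j : Fin (n - k) => ¬ p (ξ j)) := by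
        intro j hj
        rw [Finset.mem_Ici] at hj
        rw [Finset.mem_filter]
        exact ⟨Finset.mem_univ _, not_lt.mpr (hξ hj)⟩
      calc n - k - i.1 = (Finset.Ici i).card := (Fin.card_Ici _).symm
        _ ≤ _ := Finset.card_le_card hsub
    have hcardu : (Finset.univ : Finset (Fin (n - k))).card = n - k := by simp
    omega
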